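/- In the maximally parallel application step of the target-selection membrane '−' containing the catalyst c, the multiset c l_i' d (a_r')^k (a_{3-r})^m with k ≥ 1: applying rules l_i' → l_j'' and c a_r' → c in the first step erases exactly one copy of a_r', and in the subsequent step the rules l_j'' → (l_j, out), a_r' → (a_r, out), a_{3-r} → (a_{3-r}, out), d → (λ, out) restore the multiset l_j (a_r)^{k-1} (a_{3-r})^m in the surrounding region; moreover, attempting the target out in the first step necessarily introduces the trap symbol #. -/
import Mathlib


/-- Targets of rules in P systems with target selection. -/
inductive Tgt : Type
  | here | out
deriving DecidableEq

/-- A rule of a catalytic P system with target selection (in one membrane):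
non-cooperative `a → (v, tgt)` or catalytic `c a → c v` (target `here`). -/
structure TSRule (O : Type) where
  cata : Bool
  lhs : O
  rhs : Multiset O
  tgt : Tgt

/-- The objects occurring in the decrement gadget of membrane `−`:
the catalyst `c`, the labels `l_i'`, `l_j''`, `l_j`, the dummy symbol `d`,
the register symbols `a_r'`, `a_r`, `a_{3-r}`, and the trap symbol `#`. -/
inductive G : Type
  | c | li' | lj'' | lj | d | ar' | ar | a3r | trap
deriving DecidableEq

open G

/-- The multiset consumed by one application of `ρ` (`c` is the catalyst). -/
def tsLhs (ρ : TSRule G) : Multiset G := if ρ.cata then {c, ρ.lhs} else {ρ.lhs}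

/-- The multiset produced in the membrane by one application of `ρ`
(for a catalytic rule the catalyst stays). -/
def tsHere (ρ : TSRule G) : Multiset G :=
  (if ρ.tgt = Tgt.here then ρ.rhs else 0) + (if ρ.cata then {c} else 0)

/-- The multiset sent to the surrounding region by one application of `ρ`. -/
def tsOut (ρ : TSRule G) : Multiset G := if ρ.tgt = Tgt.out then ρ.rhs else 0

/-- The rules of membrane `−` relevant to the gadget:
`l_i' → l_j''`, `c a_r' → c`, `l_i'' → #`, `c d → c #` (target `here`), and
`l_j'' → (l_j, out)`, `c d → c#`, `d → (λ, out)`, `a_r' → (a_r, out)`,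
`a_{3-r} → (a_{3-r}, out)`, `# → (#, out)`, and `l → (#, out)` for the wrong
labels (here `l_i'` and `l_j`). -/
def Rminus : Set (TSRule G) :=
  {⟨false, li', {lj''}, Tgt.here⟩,
   ⟨true, ar', 0, Tgt.here⟩,
   ⟨false, lj'', {trap}, Tgt.here⟩,
   ⟨true, d, {trap}, Tgt.here⟩,
   ⟨false, lj'', {lj}, Tgt.out⟩,
   ⟨false, d, 0, Tgt.out⟩,
   ⟨false, ar', {ar}, Tgt.out⟩,
   ⟨false, a3r, {a3r}, Tgt.out⟩,
   ⟨false, trap, {trap}, Tgt.out⟩,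
   ⟨false, li', {trap}, Tgt.out⟩,
   ⟨false, lj, {trap}, Tgt.out⟩}

/-- One maximally parallel computation step of the single membrane `−` under target
selection with chosen target `t`: a non-empty multiset `rs` of rules of `R`, all with
target `t`, is applied so that no further rule with target `t` could be added.
A configuration is the pair (contents of membrane `−`, contents of the surrounding
region). -/
def TSStep1 (R : Set (TSRule G)) (t : Tgt) :
    (Multiset G × Multiset G) → (Multiset G × Multiset G) → Prop :=
  fun cfg cfg' => ∃ rs : Multiset (TSRule G),
    rs ≠ 0 ∧ (∀ ρ ∈ rs, ρ ∈ R ∧ ρ.tgt = t) ∧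
    (rs.map tsLhs).sum ≤ cfg.1 ∧
    (∀ ρ ∈ R, ρ.tgt = t → ¬ ((rs.map tsLhs).sum + tsLhs ρ ≤ cfg.1)) ∧
    cfg'.1 = cfg.1 - (rs.map tsLhs).sum + (rs.map tsHere).sum ∧
    cfg'.2 = cfg.2 + (rs.map tsOut).sum


instance : DecidableEq (TSRule G) := fun a b => by
  cases a with | mk c1 l1 r1 t1 => cases b with | mk c2 l2 r2 t2 =>
    rw [TSRule.mk.injEq]; exact inferInstance

/-- The here-rules of the gadget step. -/
def rH1 : TSRule G := ⟨false, li', {lj''}, Tgt.here⟩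
def rH2 : TSRule G := ⟨true, ar', 0, Tgt.here⟩
/-- The out-rules of `Rminus`. -/
def rO1 : TSRule G := ⟨false, lj'', {lj}, Tgt.out⟩
def rO2 : TSRule G := ⟨false, d, 0, Tgt.out⟩
def rO3 : TSRule G := ⟨false, ar', {ar}, Tgt.out⟩
def rO4 : TSRule G := ⟨false, a3r, {a3r}, Tgt.out⟩
def rO5 : TSRule G := ⟨false, trap, {trap}, Tgt.out⟩
def rO6 : TSRule G := ⟨false, li', {trap}, Tgt.out⟩
def rO7 : TSRule G := ⟨false, lj, {trap}, Tgt.out⟩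

lemma out_cases (ρ : TSRule G) (h : ρ ∈ Rminus) (ht : ρ.tgt = Tgt.out) :
    ρ = rO1 ∨ ρ = rO2 ∨ ρ = rO3 ∨ ρ = rO4 ∨ ρ = rO5 ∨ ρ = rO6 ∨ ρ = rO7 := by
  simp only [Rminus, Set.mem_insert_iff, Set.mem_singleton_iff] at h
  rcases h with rfl|rfl|rfl|rfl|rfl|rfl|rfl|rfl|rfl|rfl|rfl
  · exact absurd ht (by simp)
  · exact absurd ht (by simp)
  · exact absurd ht (by simp)
  · exact absurd ht (by simp)
  · exact Or.inl rfl
  · exact Or.inr (Or.inl rfl)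
  · exact Or.inr (Or.inr (Or.inl rfl))
  · exact Or.inr (Or.inr (Or.inr (Or.inl rfl)))
  · exact Or.inr (Or.inr (Or.inr (Or.inr (Or.inl rfl))))
  · exact Or.inr (Or.inr (Or.inr (Or.inr (Or.inr (Or.inl rfl)))))
  · exact Or.inr (Or.inr (Or.inr (Or.inr (Or.inr (Or.inr rfl)))))

lemma lhs_sum_eq (rs : Multiset (TSRule G)) (h : ∀ ρ ∈ rs, ρ.cata = false) :
    (rs.map tsLhs).sum = rs.map (·.lhs) := by
  induction rs using Multiset.induction with
  | empty => simp
  | cons a t ih =>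
    simp only [Multiset.map_cons, Multiset.sum_cons]
    rw [ih (fun ρ hρ => h ρ (Multiset.mem_cons_of_mem hρ))]
    have ha := h a (Multiset.mem_cons_self a t)
    simp [tsLhs, ha, Multiset.singleton_add]

lemma count_ge_of_max {L w : Multiset G} {x : G} (hle : L ≤ w) (hmax : ¬ (L + {x} ≤ w)) :
    w.count x ≤ L.count x := by
  by_contra hlt
  push_neg at hlt
  apply hmax
  rw [Multiset.le_iff_count]
  intro y
  rw [Multiset.count_add, Multiset.count_singleton]
  by_cases hy : y = x
  · subst hy; simp; omega
  · simp [hy]; exact Multiset.count_le_of_le y hle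

lemma count_rule (rs : Multiset (TSRule G)) (r : TSRule G)
    (h : ∀ ρ ∈ rs, ρ.lhs = r.lhs → ρ = r) :
    rs.count r = (rs.map (·.lhs)).count r.lhs := by
  rw [Multiset.count_map, Multiset.count_eq_card_filter_eq]
  congr 1
  apply Multiset.filter_congr
  intro x hx
  constructor
  · rintro rfl; rfl
  · intro hl; exact (h x hx hl.symm).symm


set_option maxHeartbeats 1600000 in
/-- correctness of the decrement gadget of membrane `−`.
From `c l_i' d (a_r')^k (a_{3-r})^m` with `k ≥ 1`:
(i) the here-step applying `l_i' → l_j''` and `c a_r' → c` erases exactly one `a_r'`,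
leading to `c l_j'' d (a_r')^(k-1) (a_{3-r})^m`;
(ii) from there, any out-step is possible and any such step sends exactly
`l_j (a_r)^(k-1) (a_{3-r})^m` to the surrounding region, leaving only the catalyst;
(iii) any out-step attempted directly in the first step introduces the trap symbol `#`. -/
theorem statement5 (k m : ℕ) (hk : 1 ≤ k) (s : Multiset G)
    (w0 w1 : Multiset G)
    (hw0 : w0 = {c, li', d} + Multiset.replicate k ar' + Multiset.replicate m a3r)
    (hw1 : w1 = {c, lj'', d} + Multiset.replicate (k - 1) ar' + Multiset.replicate m a3r) :
    -- (i) the intended first (here-)step exists and erases exactly one `a_r'`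
    TSStep1 Rminus Tgt.here (w0, s) (w1, s) ∧
    -- (ii) the second (out-)step exists and is forced
    TSStep1 Rminus Tgt.out (w1, s)
      ({c}, s + ({lj} + Multiset.replicate (k - 1) ar + Multiset.replicate m a3r)) ∧
    (∀ cfg' : Multiset G × Multiset G, TSStep1 Rminus Tgt.out (w1, s) cfg' →
        cfg' = ({c}, s + ({lj} + Multiset.replicate (k - 1) ar + Multiset.replicate m a3r))) ∧
    -- (iii) choosing the target `out` in the first step necessarily introduces `#`
    (∀ cfg' : Multiset G × Multiset G, TSStep1 Rminus Tgt.out (w0, s) cfg' →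
        trap ∈ cfg'.2) := by
  subst hw0 hw1
  refine ⟨?_, ?_, ?_, ?_⟩
  · -- part (i): the here-step
    simp only [TSStep1]
    refine ⟨{rH1, rH2}, by simp, ?_, ?_, ?_, ?_, ?_⟩
    · intro ρ hρ
      simp only [Multiset.insert_eq_cons, Multiset.mem_cons, Multiset.mem_singleton] at hρ
      rcases hρ with rfl | rfl
      · exact ⟨by simp [Rminus, rH1], rfl⟩
      · exact ⟨by simp [Rminus, rH2], rfl⟩
    · rw [Multiset.le_iff_count]
      intro g
      cases g <;> simp [tsLhs, tsHere, tsOut, rH1, rH2, rO1, rO2, rO3, rO4, rO5, rO6, rO7, Multiset.insert_eq_cons, Multiset.map_cons, Multiset.map_singleton, Multiset.map_replicate, Multiset.map_add, Multiset.sum_cons, Multiset.sum_singleton, Multiset.sum_replicate, Multiset.sum_add, Multiset.nsmul_singleton, Multiset.count_add, Multiset.count_sub, Multiset.count_cons, Multiset.count_singleton, Multiset.count_replicate] <;> omega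
    · intro ρ hρ ht
      simp only [Rminus, Set.mem_insert_iff, Set.mem_singleton_iff] at hρ
      rcases hρ with rfl|rfl|rfl|rfl|rfl|rfl|rfl|rfl|rfl|rfl|rfl
      · exact fun hle => absurd (Multiset.count_le_of_le li' hle) (by simp [tsLhs, tsHere, tsOut, rH1, rH2, rO1, rO2, rO3, rO4, rO5, rO6, rO7, Multiset.insert_eq_cons, Multiset.map_cons, Multiset.map_singleton, Multiset.map_replicate, Multiset.map_add, Multiset.sum_cons, Multiset.sum_singleton, Multiset.sum_replicate, Multiset.sum_add, Multiset.nsmul_singleton, Multiset.count_add, Multiset.count_sub, Multiset.count_cons, Multiset.count_singleton, Multiset.count_replicate] <;> omega)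
      · exact fun hle => absurd (Multiset.count_le_of_le c hle) (by simp [tsLhs, tsHere, tsOut, rH1, rH2, rO1, rO2, rO3, rO4, rO5, rO6, rO7, Multiset.insert_eq_cons, Multiset.map_cons, Multiset.map_singleton, Multiset.map_replicate, Multiset.map_add, Multiset.sum_cons, Multiset.sum_singleton, Multiset.sum_replicate, Multiset.sum_add, Multiset.nsmul_singleton, Multiset.count_add, Multiset.count_sub, Multiset.count_cons, Multiset.count_singleton, Multiset.count_replicate] <;> omega)
      · exact fun hle => absurd (Multiset.count_le_of_le lj'' hle) (by simp [tsLhs, tsHere, tsOut, rH1, rH2, rO1, rO2, rO3, rO4, rO5, rO6, rO7, Multiset.insert_eq_cons, Multiset.map_cons, Multiset.map_singleton, Multiset.map_replicate, Multiset.map_add, Multiset.sum_cons, Multiset.sum_singleton, Multiset.sum_replicate, Multiset.sum_add, Multiset.nsmul_singleton, Multiset.count_add, Multiset.count_sub, Multiset.count_cons, Multiset.count_singleton, Multiset.count_replicate] <;> omega)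
      · exact fun hle => absurd (Multiset.count_le_of_le c hle) (by simp [tsLhs, tsHere, tsOut, rH1, rH2, rO1, rO2, rO3, rO4, rO5, rO6, rO7, Multiset.insert_eq_cons, Multiset.map_cons, Multiset.map_singleton, Multiset.map_replicate, Multiset.map_add, Multiset.sum_cons, Multiset.sum_singleton, Multiset.sum_replicate, Multiset.sum_add, Multiset.nsmul_singleton, Multiset.count_add, Multiset.count_sub, Multiset.count_cons, Multiset.count_singleton, Multiset.count_replicate] <;> omega)
      · exact absurd ht (by simp)
      · exact absurd ht (by simp)
      · exact absurd ht (by simp)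
      · exact absurd ht (by simp)
      · exact absurd ht (by simp)
      · exact absurd ht (by simp)
      · exact absurd ht (by simp)
    · refine Multiset.ext.mpr fun g => ?_
      cases g <;> simp [tsLhs, tsHere, tsOut, rH1, rH2, rO1, rO2, rO3, rO4, rO5, rO6, rO7, Multiset.insert_eq_cons, Multiset.map_cons, Multiset.map_singleton, Multiset.map_replicate, Multiset.map_add, Multiset.sum_cons, Multiset.sum_singleton, Multiset.sum_replicate, Multiset.sum_add, Multiset.nsmul_singleton, Multiset.count_add, Multiset.count_sub, Multiset.count_cons, Multiset.count_singleton, Multiset.count_replicate] <;> omega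
    · simp [tsLhs, tsHere, tsOut, rH1, rH2, rO1, rO2, rO3, rO4, rO5, rO6, rO7, Multiset.insert_eq_cons, Multiset.map_cons, Multiset.map_singleton, Multiset.map_replicate, Multiset.map_add, Multiset.sum_cons, Multiset.sum_singleton, Multiset.sum_replicate, Multiset.sum_add, Multiset.nsmul_singleton, Multiset.count_add, Multiset.count_sub, Multiset.count_cons, Multiset.count_singleton, Multiset.count_replicate]
  · -- part (ii): the out-step exists
    simp only [TSStep1]
    refine ⟨rO1 ::ₘ rO2 ::ₘ (Multiset.replicate (k-1) rO3 + Multiset.replicate m rO4),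
      by simp, ?_, ?_, ?_, ?_, ?_⟩
    · intro ρ hρ
      simp only [Multiset.mem_cons, Multiset.mem_add, Multiset.mem_replicate] at hρ
      rcases hρ with rfl | rfl | ⟨-, rfl⟩ | ⟨-, rfl⟩
      · exact ⟨by simp [Rminus, rO1], rfl⟩
      · exact ⟨by simp [Rminus, rO2], rfl⟩
      · exact ⟨by simp [Rminus, rO3], rfl⟩
      · exact ⟨by simp [Rminus, rO4], rfl⟩
    · rw [Multiset.le_iff_count]
      intro g
      cases g <;> simp [tsLhs, tsHere, tsOut, rH1, rH2, rO1, rO2, rO3, rO4, rO5, rO6, rO7, Multiset.insert_eq_cons, Multiset.map_cons, Multiset.map_singleton, Multiset.map_replicate, Multiset.map_add, Multiset.sum_cons, Multiset.sum_singleton, Multiset.sum_replicate, Multiset.sum_add, Multiset.nsmul_singleton, Multiset.count_add, Multiset.count_sub, Multiset.count_cons, Multiset.count_singleton, Multiset.count_replicate] <;> omega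
    · intro ρ hρ ht
      rcases out_cases ρ hρ ht with rfl|rfl|rfl|rfl|rfl|rfl|rfl
      · exact fun hle => absurd (Multiset.count_le_of_le lj'' hle) (by simp [tsLhs, tsHere, tsOut, rH1, rH2, rO1, rO2, rO3, rO4, rO5, rO6, rO7, Multiset.insert_eq_cons, Multiset.map_cons, Multiset.map_singleton, Multiset.map_replicate, Multiset.map_add, Multiset.sum_cons, Multiset.sum_singleton, Multiset.sum_replicate, Multiset.sum_add, Multiset.nsmul_singleton, Multiset.count_add, Multiset.count_sub, Multiset.count_cons, Multiset.count_singleton, Multiset.count_replicate] <;> omega)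
      · exact fun hle => absurd (Multiset.count_le_of_le d hle) (by simp [tsLhs, tsHere, tsOut, rH1, rH2, rO1, rO2, rO3, rO4, rO5, rO6, rO7, Multiset.insert_eq_cons, Multiset.map_cons, Multiset.map_singleton, Multiset.map_replicate, Multiset.map_add, Multiset.sum_cons, Multiset.sum_singleton, Multiset.sum_replicate, Multiset.sum_add, Multiset.nsmul_singleton, Multiset.count_add, Multiset.count_sub, Multiset.count_cons, Multiset.count_singleton, Multiset.count_replicate] <;> omega)
      · exact fun hle => absurd (Multiset.count_le_of_le ar' hle) (by simp [tsLhs, tsHere, tsOut, rH1, rH2, rO1, rO2, rO3, rO4, rO5, rO6, rO7, Multiset.insert_eq_cons, Multiset.map_cons, Multiset.map_singleton, Multiset.map_replicate, Multiset.map_add, Multiset.sum_cons, Multiset.sum_singleton, Multiset.sum_replicate, Multiset.sum_add, Multiset.nsmul_singleton, Multiset.count_add, Multiset.count_sub, Multiset.count_cons, Multiset.count_singleton, Multiset.count_replicate] <;> omega)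
      · exact fun hle => absurd (Multiset.count_le_of_le a3r hle) (by simp [tsLhs, tsHere, tsOut, rH1, rH2, rO1, rO2, rO3, rO4, rO5, rO6, rO7, Multiset.insert_eq_cons, Multiset.map_cons, Multiset.map_singleton, Multiset.map_replicate, Multiset.map_add, Multiset.sum_cons, Multiset.sum_singleton, Multiset.sum_replicate, Multiset.sum_add, Multiset.nsmul_singleton, Multiset.count_add, Multiset.count_sub, Multiset.count_cons, Multiset.count_singleton, Multiset.count_replicate] <;> omega)
      · exact fun hle => absurd (Multiset.count_le_of_le trap hle) (by simp [tsLhs, tsHere, tsOut, rH1, rH2, rO1, rO2, rO3, rO4, rO5, rO6, rO7, Multiset.insert_eq_cons, Multiset.map_cons, Multiset.map_singleton, Multiset.map_replicate, Multiset.map_add, Multiset.sum_cons, Multiset.sum_singleton, Multiset.sum_replicate, Multiset.sum_add, Multiset.nsmul_singleton, Multiset.count_add, Multiset.count_sub, Multiset.count_cons, Multiset.count_singleton, Multiset.count_replicate] <;> omega)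
      · exact fun hle => absurd (Multiset.count_le_of_le li' hle) (by simp [tsLhs, tsHere, tsOut, rH1, rH2, rO1, rO2, rO3, rO4, rO5, rO6, rO7, Multiset.insert_eq_cons, Multiset.map_cons, Multiset.map_singleton, Multiset.map_replicate, Multiset.map_add, Multiset.sum_cons, Multiset.sum_singleton, Multiset.sum_replicate, Multiset.sum_add, Multiset.nsmul_singleton, Multiset.count_add, Multiset.count_sub, Multiset.count_cons, Multiset.count_singleton, Multiset.count_replicate] <;> omega)
      · exact fun hle => absurd (Multiset.count_le_of_le lj hle) (by simp [tsLhs, tsHere, tsOut, rH1, rH2, rO1, rO2, rO3, rO4, rO5, rO6, rO7, Multiset.insert_eq_cons, Multiset.map_cons, Multiset.map_singleton, Multiset.map_replicate, Multiset.map_add, Multiset.sum_cons, Multiset.sum_singleton, Multiset.sum_replicate, Multiset.sum_add, Multiset.nsmul_singleton, Multiset.count_add, Multiset.count_sub, Multiset.count_cons, Multiset.count_singleton, Multiset.count_replicate] <;> omega)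
    · refine Multiset.ext.mpr fun g => ?_
      cases g <;> simp [tsLhs, tsHere, tsOut, rH1, rH2, rO1, rO2, rO3, rO4, rO5, rO6, rO7, Multiset.insert_eq_cons, Multiset.map_cons, Multiset.map_singleton, Multiset.map_replicate, Multiset.map_add, Multiset.sum_cons, Multiset.sum_singleton, Multiset.sum_replicate, Multiset.sum_add, Multiset.nsmul_singleton, Multiset.count_add, Multiset.count_sub, Multiset.count_cons, Multiset.count_singleton, Multiset.count_replicate] <;> omega
    · refine Multiset.ext.mpr fun g => ?_
      cases g <;> simp [tsLhs, tsHere, tsOut, rH1, rH2, rO1, rO2, rO3, rO4, rO5, rO6, rO7, Multiset.insert_eq_cons, Multiset.map_cons, Multiset.map_singleton, Multiset.map_replicate, Multiset.map_add, Multiset.sum_cons, Multiset.sum_singleton, Multiset.sum_replicate, Multiset.sum_add, Multiset.nsmul_singleton, Multiset.count_add, Multiset.count_sub, Multiset.count_cons, Multiset.count_singleton, Multiset.count_replicate] <;> omega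
  · -- part (ii'): the out-step is forced
    intro cfg' hstep
    simp only [TSStep1] at hstep
    obtain ⟨rs, hne, hall, hle, hmax, h1, h2⟩ := hstep
    have hout : ∀ ρ ∈ rs, ρ = rO1 ∨ ρ = rO2 ∨ ρ = rO3 ∨ ρ = rO4 ∨ ρ = rO5 ∨ ρ = rO6 ∨ ρ = rO7 :=
      fun ρ h => out_cases ρ (hall ρ h).1 (hall ρ h).2
    have hnc : ∀ ρ ∈ rs, ρ.cata = false := by
      intro ρ h; rcases hout ρ h with rfl|rfl|rfl|rfl|rfl|rfl|rfl <;> rfl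
    rw [lhs_sum_eq rs hnc] at hle hmax
    have hub := fun x => Multiset.count_le_of_le (s := rs.map (·.lhs)) x hle
    have e1 : (rs.map (·.lhs)).count lj'' = 1 := by
      have ha := hub lj''
      have hb := count_ge_of_max hle (by simpa [tsLhs, rO1] using hmax rO1 (by simp [Rminus, rO1]) rfl)
      simp [tsLhs, tsHere, tsOut, rH1, rH2, rO1, rO2, rO3, rO4, rO5, rO6, rO7, Multiset.insert_eq_cons, Multiset.map_cons, Multiset.map_singleton, Multiset.map_replicate, Multiset.map_add, Multiset.sum_cons, Multiset.sum_singleton, Multiset.sum_replicate, Multiset.sum_add, Multiset.nsmul_singleton, Multiset.count_add, Multiset.count_sub, Multiset.count_cons, Multiset.count_singleton, Multiset.count_replicate] at ha hb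
      omega
    have e2 : (rs.map (·.lhs)).count d = 1 := by
      have ha := hub d
      have hb := count_ge_of_max hle (by simpa [tsLhs, rO2] using hmax rO2 (by simp [Rminus, rO2]) rfl)
      simp [tsLhs, tsHere, tsOut, rH1, rH2, rO1, rO2, rO3, rO4, rO5, rO6, rO7, Multiset.insert_eq_cons, Multiset.map_cons, Multiset.map_singleton, Multiset.map_replicate, Multiset.map_add, Multiset.sum_cons, Multiset.sum_singleton, Multiset.sum_replicate, Multiset.sum_add, Multiset.nsmul_singleton, Multiset.count_add, Multiset.count_sub, Multiset.count_cons, Multiset.count_singleton, Multiset.count_replicate] at ha hb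
      omega
    have e3 : (rs.map (·.lhs)).count ar' = k - 1 := by
      have ha := hub ar'
      have hb := count_ge_of_max hle (by simpa [tsLhs, rO3] using hmax rO3 (by simp [Rminus, rO3]) rfl)
      simp [tsLhs, tsHere, tsOut, rH1, rH2, rO1, rO2, rO3, rO4, rO5, rO6, rO7, Multiset.insert_eq_cons, Multiset.map_cons, Multiset.map_singleton, Multiset.map_replicate, Multiset.map_add, Multiset.sum_cons, Multiset.sum_singleton, Multiset.sum_replicate, Multiset.sum_add, Multiset.nsmul_singleton, Multiset.count_add, Multiset.count_sub, Multiset.count_cons, Multiset.count_singleton, Multiset.count_replicate] at ha hb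
      omega
    have e4 : (rs.map (·.lhs)).count a3r = m := by
      have ha := hub a3r
      have hb := count_ge_of_max hle (by simpa [tsLhs, rO4] using hmax rO4 (by simp [Rminus, rO4]) rfl)
      simp [tsLhs, tsHere, tsOut, rH1, rH2, rO1, rO2, rO3, rO4, rO5, rO6, rO7, Multiset.insert_eq_cons, Multiset.map_cons, Multiset.map_singleton, Multiset.map_replicate, Multiset.map_add, Multiset.sum_cons, Multiset.sum_singleton, Multiset.sum_replicate, Multiset.sum_add, Multiset.nsmul_singleton, Multiset.count_add, Multiset.count_sub, Multiset.count_cons, Multiset.count_singleton, Multiset.count_replicate] at ha hb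
      omega
    have z5 : (rs.map (·.lhs)).count trap = 0 := by
      simpa [tsLhs, tsHere, tsOut, rH1, rH2, rO1, rO2, rO3, rO4, rO5, rO6, rO7, Multiset.insert_eq_cons, Multiset.map_cons, Multiset.map_singleton, Multiset.map_replicate, Multiset.map_add, Multiset.sum_cons, Multiset.sum_singleton, Multiset.sum_replicate, Multiset.sum_add, Multiset.nsmul_singleton, Multiset.count_add, Multiset.count_sub, Multiset.count_cons, Multiset.count_singleton, Multiset.count_replicate] using hub trap
    have z6 : (rs.map (·.lhs)).count li' = 0 := by
      simpa [tsLhs, tsHere, tsOut, rH1, rH2, rO1, rO2, rO3, rO4, rO5, rO6, rO7, Multiset.insert_eq_cons, Multiset.map_cons, Multiset.map_singleton, Multiset.map_replicate, Multiset.map_add, Multiset.sum_cons, Multiset.sum_singleton, Multiset.sum_replicate, Multiset.sum_add, Multiset.nsmul_singleton, Multiset.count_add, Multiset.count_sub, Multiset.count_cons, Multiset.count_singleton, Multiset.count_replicate] using hub li'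
    have z7 : (rs.map (·.lhs)).count lj = 0 := by
      simpa [tsLhs, tsHere, tsOut, rH1, rH2, rO1, rO2, rO3, rO4, rO5, rO6, rO7, Multiset.insert_eq_cons, Multiset.map_cons, Multiset.map_singleton, Multiset.map_replicate, Multiset.map_add, Multiset.sum_cons, Multiset.sum_singleton, Multiset.sum_replicate, Multiset.sum_add, Multiset.nsmul_singleton, Multiset.count_add, Multiset.count_sub, Multiset.count_cons, Multiset.count_singleton, Multiset.count_replicate] using hub lj
    have hdet : ∀ r : TSRule G, r = rO1 ∨ r = rO2 ∨ r = rO3 ∨ r = rO4 ∨ r = rO5 ∨ r = rO6 ∨ r = rO7 →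
        ∀ ρ ∈ rs, ρ.lhs = r.lhs → ρ = r := by
      intro r hr ρ hρ hlh
      rcases hout ρ hρ with rfl|rfl|rfl|rfl|rfl|rfl|rfl <;>
        rcases hr with rfl|rfl|rfl|rfl|rfl|rfl|rfl <;>
        first
          | rfl
          | (exfalso; simp [rO1, rO2, rO3, rO4, rO5, rO6, rO7] at hlh)
    have d1 : rs.count rO1 = 1 := by
      rw [count_rule rs rO1 (hdet rO1 (by tauto))]; simpa [rO1] using e1
    have d2 : rs.count rO2 = 1 := by
      rw [count_rule rs rO2 (hdet rO2 (by tauto))]; simpa [rO2] using e2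
    have d3 : rs.count rO3 = k - 1 := by
      rw [count_rule rs rO3 (hdet rO3 (by tauto))]; simpa [rO3] using e3
    have d4 : rs.count rO4 = m := by
      rw [count_rule rs rO4 (hdet rO4 (by tauto))]; simpa [rO4] using e4
    have d5 : rs.count rO5 = 0 := by
      rw [count_rule rs rO5 (hdet rO5 (by tauto))]; simpa [rO5] using z5
    have d6 : rs.count rO6 = 0 := by
      rw [count_rule rs rO6 (hdet rO6 (by tauto))]; simpa [rO6] using z6
    have d7 : rs.count rO7 = 0 := by
      rw [count_rule rs rO7 (hdet rO7 (by tauto))]; simpa [rO7] using z7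
    have n12 : rO1 ≠ rO2 := by simp [rO1, rO2, rO3, rO4]
    have n13 : rO1 ≠ rO3 := by simp [rO1, rO2, rO3, rO4]
    have n14 : rO1 ≠ rO4 := by simp [rO1, rO2, rO3, rO4]
    have n21 : rO2 ≠ rO1 := by simp [rO1, rO2, rO3, rO4]
    have n23 : rO2 ≠ rO3 := by simp [rO1, rO2, rO3, rO4]
    have n24 : rO2 ≠ rO4 := by simp [rO1, rO2, rO3, rO4]
    have n31 : rO3 ≠ rO1 := by simp [rO1, rO2, rO3, rO4]
    have n32 : rO3 ≠ rO2 := by simp [rO1, rO2, rO3, rO4]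
    have n34 : rO3 ≠ rO4 := by simp [rO1, rO2, rO3, rO4]
    have n41 : rO4 ≠ rO1 := by simp [rO1, rO2, rO3, rO4]
    have n42 : rO4 ≠ rO2 := by simp [rO1, rO2, rO3, rO4]
    have n43 : rO4 ≠ rO3 := by simp [rO1, rO2, rO3, rO4]
    have hrs : rs = rO1 ::ₘ rO2 ::ₘ (Multiset.replicate (k-1) rO3 + Multiset.replicate m rO4) := by
      refine Multiset.ext.mpr fun ρ => ?_
      by_cases p1 : ρ = rO1
      · subst p1; rw [d1]
        simp [Multiset.count_cons, Multiset.count_add, Multiset.count_replicate, n12, n13, n14, n21, n23, n24, n31, n32, n34, n41, n42, n43, Ne.symm]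
      by_cases p2 : ρ = rO2
      · subst p2; rw [d2]
        simp [Multiset.count_cons, Multiset.count_add, Multiset.count_replicate, n12, n13, n14, n21, n23, n24, n31, n32, n34, n41, n42, n43, Ne.symm]
      by_cases p3 : ρ = rO3
      · subst p3; rw [d3]
        simp [Multiset.count_cons, Multiset.count_add, Multiset.count_replicate, n12, n13, n14, n21, n23, n24, n31, n32, n34, n41, n42, n43, Ne.symm]
      by_cases p4 : ρ = rO4
      · subst p4; rw [d4]
        simp [Multiset.count_cons, Multiset.count_add, Multiset.count_replicate, n12, n13, n14, n21, n23, n24, n31, n32, n34, n41, n42, n43, Ne.symm]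
      · have hnm : ρ ∉ rs := by
          intro hm
          rcases hout ρ hm with rfl|rfl|rfl|rfl|rfl|rfl|rfl
          · exact p1 rfl
          · exact p2 rfl
          · exact p3 rfl
          · exact p4 rfl
          · exact absurd hm (Multiset.count_eq_zero.mp d5)
          · exact absurd hm (Multiset.count_eq_zero.mp d6)
          · exact absurd hm (Multiset.count_eq_zero.mp d7)
        rw [Multiset.count_eq_zero.mpr hnm]
        simp [Multiset.count_cons, Multiset.count_add, Multiset.count_replicate, p1, p2, p3, p4,
          Ne.symm p1, Ne.symm p2, Ne.symm p3, Ne.symm p4]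
    subst hrs
    have g1 : cfg'.1 = {c} := by
      rw [h1]
      refine Multiset.ext.mpr fun g => ?_
      cases g <;> simp [tsLhs, tsHere, tsOut, rH1, rH2, rO1, rO2, rO3, rO4, rO5, rO6, rO7, Multiset.insert_eq_cons, Multiset.map_cons, Multiset.map_singleton, Multiset.map_replicate, Multiset.map_add, Multiset.sum_cons, Multiset.sum_singleton, Multiset.sum_replicate, Multiset.sum_add, Multiset.nsmul_singleton, Multiset.count_add, Multiset.count_sub, Multiset.count_cons, Multiset.count_singleton, Multiset.count_replicate] <;> omega
    have g2 : cfg'.2 = s + ({lj} + Multiset.replicate (k - 1) ar + Multiset.replicate m a3r) := by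
      rw [h2]
      refine Multiset.ext.mpr fun g => ?_
      cases g <;> simp [tsLhs, tsHere, tsOut, rH1, rH2, rO1, rO2, rO3, rO4, rO5, rO6, rO7, Multiset.insert_eq_cons, Multiset.map_cons, Multiset.map_singleton, Multiset.map_replicate, Multiset.map_add, Multiset.sum_cons, Multiset.sum_singleton, Multiset.sum_replicate, Multiset.sum_add, Multiset.nsmul_singleton, Multiset.count_add, Multiset.count_sub, Multiset.count_cons, Multiset.count_singleton, Multiset.count_replicate] <;> omega
    exact Prod.ext_iff.mpr ⟨g1, g2⟩
  · -- part (iii): out in the first step introduces the trap symbol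
    intro cfg' hstep
    simp only [TSStep1] at hstep
    obtain ⟨rs, hne, hall, hle, hmax, h1, h2⟩ := hstep
    have hout : ∀ ρ ∈ rs, ρ = rO1 ∨ ρ = rO2 ∨ ρ = rO3 ∨ ρ = rO4 ∨ ρ = rO5 ∨ ρ = rO6 ∨ ρ = rO7 :=
      fun ρ h => out_cases ρ (hall ρ h).1 (hall ρ h).2
    have hnc : ∀ ρ ∈ rs, ρ.cata = false := by
      intro ρ h; rcases hout ρ h with rfl|rfl|rfl|rfl|rfl|rfl|rfl <;> rfl
    rw [lhs_sum_eq rs hnc] at hle hmax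
    have hge := count_ge_of_max hle (by simpa [tsLhs, rO6] using hmax rO6 (by simp [Rminus, rO6]) rfl)
    have hmem : li' ∈ rs.map (·.lhs) := by
      simp [tsLhs, tsHere, tsOut, rH1, rH2, rO1, rO2, rO3, rO4, rO5, rO6, rO7, Multiset.insert_eq_cons, Multiset.map_cons, Multiset.map_singleton, Multiset.map_replicate, Multiset.map_add, Multiset.sum_cons, Multiset.sum_singleton, Multiset.sum_replicate, Multiset.sum_add, Multiset.nsmul_singleton, Multiset.count_add, Multiset.count_sub, Multiset.count_cons, Multiset.count_singleton, Multiset.count_replicate] at hge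
      exact Multiset.count_pos.mp (by omega)
    obtain ⟨ρ, hρ, hlhs⟩ := Multiset.mem_map.mp hmem
    have hρ6 : ρ = rO6 := by
      rcases hout ρ hρ with rfl|rfl|rfl|rfl|rfl|rfl|rfl <;>
        first
          | rfl
          | (exfalso; simp [rO1, rO2, rO3, rO4, rO5, rO6, rO7] at hlhs)
    subst hρ6
    obtain ⟨t, rfl⟩ := Multiset.exists_cons_of_mem hρ
    rw [h2]
    simp only [Multiset.map_cons, Multiset.sum_cons]
    refine Multiset.mem_add.mpr (Or.inr (Multiset.mem_add.mpr (Or.inl ?_)))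
    simp [tsOut, rO6]
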